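/- Fix n and let the positive integer m → ∞. Then for every fixed positive integer r, r·∫_0^∞ [1 − (1 − S_m(mξ)e^{−mξ})^n]·ξ^{r−1} dξ → 1 as m → ∞; equivalently, the r-th moment r·n^r·∫_0^∞ [1 − (1 − S_m(τ)e^{−τ})^n]·τ^{r−1} dτ of the maximum of n independent Erlang(m, 1/n) random variables is asymptotically equivalent to n^r·m^r as m → ∞. -/

import Mathlib

set_option maxHeartbeats 1000000


open MeasureTheory Filter Real

/-- `S m y = ∑_{l=0}^{m-1} y^l / l!`, the `m`-th partial sum of the Taylor series of `e^y`. -/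
noncomputable def S (m : ℕ) (y : ℝ) : ℝ := ∑ l ∈ Finset.range m, y ^ l / (Nat.factorial l)

lemma S_nonneg (m : ℕ) {y : ℝ} (hy : 0 ≤ y) : 0 ≤ S m y :=
  Finset.sum_nonneg fun l _ => by positivity

lemma S_le_exp (m : ℕ) {y : ℝ} (hy : 0 ≤ y) : S m y ≤ Real.exp y :=
  Real.sum_le_exp_of_nonneg hy m

lemma G_nonneg (m : ℕ) {y : ℝ} (hy : 0 ≤ y) : 0 ≤ S m y * Real.exp (-y) :=
  mul_nonneg (S_nonneg m hy) (Real.exp_pos _).le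

lemma G_le_one (m : ℕ) {y : ℝ} (hy : 0 ≤ y) : S m y * Real.exp (-y) ≤ 1 := by
  have h := S_le_exp m hy
  calc S m y * Real.exp (-y) ≤ Real.exp y * Real.exp (-y) :=
        mul_le_mul_of_nonneg_right h (Real.exp_pos _).le
    _ = 1 := by rw [← Real.exp_add]; simp

@[fun_prop]
lemma continuous_S (m : ℕ) : Continuous (S m) :=
  continuous_finset_sum _ fun l _ => (continuous_pow l).div_const _

lemma pow_div_factorial_mono {y : ℝ} (hy0 : 0 ≤ y) {l j : ℕ} (hl : l ≤ j) (hy : (j : ℝ) ≤ y) :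
    y ^ l / (Nat.factorial l) ≤ y ^ j / (Nat.factorial j) := by
  induction j, hl using Nat.le_induction with
  | base => exact le_refl _
  | succ j hj ih =>
    have hyj : (j : ℝ) ≤ y := by push_cast at hy ⊢; linarith
    refine (ih hyj).trans ?_
    rw [pow_succ, Nat.factorial_succ]
    have h1 : (0:ℝ) ≤ y ^ j := pow_nonneg hy0 j
    have h2 : (0:ℝ) < (Nat.factorial j : ℝ) := by positivity
    rw [div_le_div_iff₀ h2 (by push_cast; positivity)]
    push_cast
    push_cast at hy
    nlinarith [mul_nonneg h1 h2.le]

/-- Chernoff-type upper bound for the upper tail, valid for `ξ ≥ 1`, `m ≥ 1`. -/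
lemma chernoff_upper {m : ℕ} (hm : 1 ≤ m) {ξ : ℝ} (hξ : 1 ≤ ξ) :
    S m ((m:ℝ) * ξ) * Real.exp (-((m:ℝ) * ξ)) ≤ m * (ξ * Real.exp (1 - ξ)) ^ m := by
  have hξ0 : (0:ℝ) < ξ := lt_of_lt_of_le zero_lt_one hξ
  have hm0 : (0:ℝ) < m := by exact_mod_cast hm
  have hy0 : (0:ℝ) ≤ (m:ℝ) * ξ := by positivity
  have hstep : S m ((m:ℝ)*ξ) ≤ m * (Real.exp m * ξ ^ (m-1)) := by
    have hterm : ∀ l ∈ Finset.range m,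
        ((m:ℝ)*ξ)^l / (Nat.factorial l) ≤ ((m:ℝ)*ξ)^(m-1)/(Nat.factorial (m-1)) := by
      intro l hl
      apply pow_div_factorial_mono hy0 (Nat.le_pred_of_lt (Finset.mem_range.mp hl))
      have h1 : ((m-1:ℕ):ℝ) ≤ (m:ℝ) := by exact_mod_cast Nat.sub_le m 1
      exact h1.trans (le_mul_of_one_le_right hm0.le hξ)
    have h2 : ((m:ℝ)*ξ)^(m-1)/(Nat.factorial (m-1)) ≤ Real.exp m * ξ^(m-1) := by
      have h3 : ((m:ℝ))^(m-1)/(Nat.factorial (m-1)) ≤ Real.exp m :=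
        Real.pow_div_factorial_le_exp _ hm0.le (m-1)
      calc ((m:ℝ)*ξ)^(m-1)/(Nat.factorial (m-1))
          = ((m:ℝ)^(m-1)/(Nat.factorial (m-1))) * ξ^(m-1) := by rw [mul_pow]; ring
        _ ≤ Real.exp m * ξ^(m-1) :=
            mul_le_mul_of_nonneg_right h3 (pow_nonneg hξ0.le _)
    calc S m ((m:ℝ)*ξ) ≤ ∑ _l ∈ Finset.range m, ((m:ℝ)*ξ)^(m-1)/(Nat.factorial (m-1)) :=
          Finset.sum_le_sum hterm
      _ = m * (((m:ℝ)*ξ)^(m-1)/(Nat.factorial (m-1))) := by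
          rw [Finset.sum_const, Finset.card_range, nsmul_eq_mul]
      _ ≤ m * (Real.exp m * ξ^(m-1)) := by
          exact mul_le_mul_of_nonneg_left h2 hm0.le
  have hpow : ξ^(m-1) ≤ ξ^m := pow_le_pow_right₀ hξ (Nat.sub_le m 1)
  have hrhs : (ξ * Real.exp (1-ξ))^m = ξ^m * (Real.exp m * Real.exp (-((m:ℝ)*ξ))) := by
    rw [mul_pow, ← Real.exp_nat_mul]
    rw [show Real.exp ((m:ℝ)*(1-ξ)) = Real.exp m * Real.exp (-((m:ℝ)*ξ)) by
      rw [← Real.exp_add]; congr 1; ring]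
  calc S m ((m:ℝ)*ξ) * Real.exp (-((m:ℝ)*ξ))
      ≤ (m * (Real.exp m * ξ^(m-1))) * Real.exp (-((m:ℝ)*ξ)) :=
        mul_le_mul_of_nonneg_right hstep (Real.exp_pos _).le
    _ ≤ (m * (Real.exp m * ξ^m)) * Real.exp (-((m:ℝ)*ξ)) := by gcongr
    _ = m * (ξ * Real.exp (1-ξ))^m := by rw [hrhs]; ring

/-- Upper bound on the lower tail, valid for `0 < ξ < 1`, `m ≥ 1`. -/
lemma tail_upper {m : ℕ} (hm : 1 ≤ m) {ξ : ℝ} (h0 : 0 < ξ) (h1 : ξ < 1) :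
    1 - S m ((m:ℝ) * ξ) * Real.exp (-((m:ℝ) * ξ)) ≤ (ξ * Real.exp (1 - ξ)) ^ m / (1 - ξ) := by
  have hm0 : (0:ℝ) < m := by exact_mod_cast hm
  set y : ℝ := (m:ℝ) * ξ with hy
  have hy0 : 0 ≤ y := by positivity
  have hterm : ∀ k : ℕ, y ^ (m + k) / (Nat.factorial (m + k)) ≤
      y ^ m / (Nat.factorial m) * ξ ^ k := by
    intro k
    have hfac : (Nat.factorial m : ℝ) * (m:ℝ) ^ k ≤ (Nat.factorial (m+k) : ℝ) := by
      exact_mod_cast le_trans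
        (Nat.mul_le_mul_left _ (Nat.pow_le_pow_left (Nat.le_succ m) k))
        Nat.factorial_mul_pow_le_factorial
    have h2 : y ^ (m+k) / (Nat.factorial (m+k)) ≤ y^(m+k) / ((Nat.factorial m : ℝ) * (m:ℝ)^k) :=
      div_le_div_of_nonneg_left (pow_nonneg hy0 _) (by positivity) hfac
    refine h2.trans (le_of_eq ?_)
    have hyk : y ^ k = (m:ℝ)^k * ξ^k := by rw [hy, mul_pow]
    rw [pow_add, hyk]
    field_simp
  have hgeom : ∀ N : ℕ, ∑ k ∈ Finset.range N, ξ^k ≤ (1-ξ)⁻¹ := fun N =>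
    (Summable.sum_le_tsum (Finset.range N) (fun _ _ => by positivity)
      (summable_geometric_of_lt_one h0.le h1)).trans_eq (tsum_geometric_of_lt_one h0.le h1)
  have hlim : Tendsto (fun N => S N y) atTop (nhds (Real.exp y)) := by
    have h := (NormedSpace.expSeries_div_hasSum_exp (𝔸 := ℝ) y).tendsto_sum_nat
    rw [← Real.exp_eq_exp_ℝ] at h
    exact h
  have key : Real.exp y ≤ S m y + y ^ m / (Nat.factorial m) * (1-ξ)⁻¹ := by
    refine le_of_tendsto hlim (eventually_atTop.mpr ⟨m, fun N hN => ?_⟩)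
    have hsplit : S N y = S m y + ∑ l ∈ Finset.Ico m N, y^l/(Nat.factorial l) := by
      unfold S
      rw [Finset.range_eq_Ico, Finset.range_eq_Ico]
      exact (Finset.sum_Ico_consecutive _ (Nat.zero_le m) hN).symm
    rw [hsplit]
    have : ∑ l ∈ Finset.Ico m N, y^l/(Nat.factorial l)
        ≤ y ^ m / (Nat.factorial m) * (1-ξ)⁻¹ := by
      rw [Finset.sum_Ico_eq_sum_range]
      calc ∑ k ∈ Finset.range (N - m), y^(m+k)/(Nat.factorial (m+k))
          ≤ ∑ k ∈ Finset.range (N - m), y ^ m / (Nat.factorial m) * ξ ^ k :=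
            Finset.sum_le_sum fun k _ => hterm k
        _ = y ^ m / (Nat.factorial m) * ∑ k ∈ Finset.range (N - m), ξ ^ k := by
            rw [Finset.mul_sum]
        _ ≤ y ^ m / (Nat.factorial m) * (1-ξ)⁻¹ :=
            mul_le_mul_of_nonneg_left (hgeom _) (by positivity)
    linarith
  have h3 : 1 - S m y * Real.exp (-y) ≤ y^m/(Nat.factorial m) * (1-ξ)⁻¹ * Real.exp (-y) := by
    have hmul := mul_le_mul_of_nonneg_right key (Real.exp_pos (-y)).le
    have hexp : Real.exp y * Real.exp (-y) = 1 := by rw [← Real.exp_add]; simp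
    nlinarith
  have h4 : y^m/(Nat.factorial m) ≤ Real.exp m * ξ^m := by
    have hym : y^m = (m:ℝ)^m * ξ^m := by rw [hy, mul_pow]
    rw [hym]
    calc (m:ℝ)^m * ξ^m / (Nat.factorial m) = ((m:ℝ)^m/(Nat.factorial m)) * ξ^m := by ring
      _ ≤ Real.exp m * ξ^m :=
          mul_le_mul_of_nonneg_right (Real.pow_div_factorial_le_exp _ hm0.le m) (pow_nonneg h0.le m)
  have h5 : Real.exp m * ξ^m * Real.exp (-y) = (ξ * Real.exp (1-ξ))^m := by
    have e1 : Real.exp ((m:ℝ)*(1-ξ)) = Real.exp m * Real.exp (-y) := by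
      rw [← Real.exp_add, hy]
      congr 1
      ring
    rw [mul_pow, ← Real.exp_nat_mul, e1]
    ring
  have h6 : (0:ℝ) < 1 - ξ := by linarith
  calc 1 - S m y * Real.exp (-y) ≤ y^m/(Nat.factorial m) * (1-ξ)⁻¹ * Real.exp (-y) := h3
    _ ≤ (Real.exp m * ξ^m) * (1-ξ)⁻¹ * Real.exp (-y) := by gcongr
    _ = (ξ * Real.exp (1-ξ))^m / (1-ξ) := by rw [← h5]; field_simp

lemma q_nonneg {t : ℝ} (h0 : 0 ≤ t) : 0 ≤ t * Real.exp (1 - t) :=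
  mul_nonneg h0 (Real.exp_pos _).le

lemma q_lt_one {t : ℝ} (h0 : 0 < t) (h1 : t ≠ 1) : t * Real.exp (1 - t) < 1 := by
  have h := Real.log_lt_sub_one_of_pos h0 h1
  calc t * Real.exp (1-t) = Real.exp (Real.log t + (1-t)) := by
        rw [Real.exp_add, Real.exp_log h0]
    _ < Real.exp 0 := by apply Real.exp_lt_exp.mpr; linarith
    _ = 1 := Real.exp_zero

/-- Pointwise convergence of the integrand for `ξ > 0`, `ξ ≠ 1`. -/
lemma ptwise (n r : ℕ) (hn : 0 < n) {ξ : ℝ} (h0 : 0 < ξ) (h1 : ξ ≠ 1) :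
    Tendsto (fun m : ℕ =>
        (1 - (1 - S m ((m:ℝ)*ξ) * Real.exp (-((m:ℝ)*ξ)))^n) * ξ^(r-1)) atTop
      (nhds (Set.indicator (Set.Ioo (0:ℝ) 1) (fun t => t^(r-1)) ξ)) := by
  have hq0 : 0 ≤ ξ * Real.exp (1 - ξ) := q_nonneg h0.le
  have hq1 : ξ * Real.exp (1 - ξ) < 1 := q_lt_one h0 h1
  rcases lt_or_gt_of_ne h1 with hlt | hgt
  · -- ξ < 1 : integrand → ξ^(r-1)
    rw [Set.indicator_of_mem (Set.mem_Ioo.mpr ⟨h0, hlt⟩)]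
    have hD : Tendsto (fun m : ℕ => 1 - S m ((m:ℝ)*ξ) * Real.exp (-((m:ℝ)*ξ))) atTop
        (nhds 0) := by
      apply squeeze_zero'
      · filter_upwards with m
        have := G_le_one m (y := (m:ℝ)*ξ) (by positivity)
        linarith
      · filter_upwards [eventually_ge_atTop 1] with m hm
        exact tail_upper hm h0 hlt
      · have := (tendsto_pow_atTop_nhds_zero_of_lt_one hq0 hq1).div_const (1 - ξ)
        simpa using this
    have hT : Tendsto (fun m : ℕ =>
        (1 - (1 - S m ((m:ℝ)*ξ) * Real.exp (-((m:ℝ)*ξ)))^n) * ξ^(r-1)) atTop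
        (nhds ((1 - (0:ℝ)^n) * ξ^(r-1))) :=
      (tendsto_const_nhds.sub (hD.pow n)).mul_const _
    simpa [zero_pow hn.ne'] using hT
  · -- ξ > 1 : integrand → 0
    rw [Set.indicator_of_notMem (by simp [Set.mem_Ioo]; intro h; linarith)]
    have hG : Tendsto (fun m : ℕ => S m ((m:ℝ)*ξ) * Real.exp (-((m:ℝ)*ξ))) atTop (nhds 0) := by
      apply squeeze_zero'
      · filter_upwards with m
        exact G_nonneg m (by positivity)
      · filter_upwards [eventually_ge_atTop 1] with m hm
        exact chernoff_upper hm hgt.le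
      · have := tendsto_pow_const_mul_const_pow_of_lt_one 1 hq0 hq1
        simpa using this
    have hT : Tendsto (fun m : ℕ =>
        (1 - (1 - S m ((m:ℝ)*ξ) * Real.exp (-((m:ℝ)*ξ)))^n) * ξ^(r-1)) atTop
        (nhds ((1 - (1 - (0:ℝ))^n) * ξ^(r-1))) :=
      (tendsto_const_nhds.sub ((tendsto_const_nhds.sub hG).pow n)).mul_const _
    simpa using hT

lemma integrand_nonneg (n : ℕ) {m : ℕ} {ξ : ℝ} (h0 : 0 < ξ) (r : ℕ) :
    0 ≤ (1 - (1 - S m ((m:ℝ)*ξ) * Real.exp (-((m:ℝ)*ξ)))^n) * ξ^(r-1) := by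
  have hy0 : (0:ℝ) ≤ (m:ℝ)*ξ := by positivity
  have h1 := G_le_one m hy0
  have h2 := G_nonneg m hy0
  have hD1 : (1 - S m ((m:ℝ)*ξ) * Real.exp (-((m:ℝ)*ξ)))^n ≤ 1 :=
    pow_le_one₀ (by linarith) (by linarith)
  have := pow_nonneg h0.le (r-1)
  nlinarith

/-- `ξ e^{1-ξ} ≤ e^{-ξ/4}` for `ξ ≥ 4`. -/
lemma q_le_exp_quarter {ξ : ℝ} (hξ : 4 ≤ ξ) : ξ * Real.exp (1 - ξ) ≤ Real.exp (-(ξ/4)) := by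
  have key : ξ ≤ Real.exp (3*ξ/4 - 1) := by
    have h1 : (3*ξ/4 - 1)/2 + 1 ≤ Real.exp ((3*ξ/4 - 1)/2) := Real.add_one_le_exp _
    have h2 : Real.exp (3*ξ/4 - 1) = Real.exp ((3*ξ/4 - 1)/2) * Real.exp ((3*ξ/4 - 1)/2) := by
      rw [← Real.exp_add]; ring_nf
    have h3 : (0:ℝ) ≤ (3*ξ/4 - 1)/2 + 1 := by linarith
    nlinarith [Real.exp_pos ((3*ξ/4 - 1)/2)]
  calc ξ * Real.exp (1-ξ) ≤ Real.exp (3*ξ/4 - 1) * Real.exp (1-ξ) :=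
        mul_le_mul_of_nonneg_right key (Real.exp_pos _).le
    _ = Real.exp (-(ξ/4)) := by rw [← Real.exp_add]; ring_nf

/-- For `ξ ≥ 4` and `m ≥ 1`, the upper-tail probability is at most `e^{-ξ/4}`. -/
lemma chernoff_uniform {m : ℕ} (hm : 1 ≤ m) {ξ : ℝ} (hξ : 4 ≤ ξ) :
    S m ((m:ℝ)*ξ) * Real.exp (-((m:ℝ)*ξ)) ≤ Real.exp (-(ξ/4)) := by
  have hm0 : (0:ℝ) < m := by exact_mod_cast hm
  have hm1 : (1:ℝ) ≤ m := by exact_mod_cast hm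
  have h1 : S m ((m:ℝ)*ξ) * Real.exp (-((m:ℝ)*ξ)) ≤ m * (ξ * Real.exp (1-ξ))^m :=
    chernoff_upper hm (by linarith)
  have h2 : (ξ * Real.exp (1-ξ))^m ≤ (Real.exp (-(ξ/4)))^m :=
    pow_le_pow_left₀ (q_nonneg (by linarith)) (q_le_exp_quarter hξ) m
  have h3 : (Real.exp (-(ξ/4)))^m = Real.exp ((m:ℝ) * (-(ξ/4))) := (Real.exp_nat_mul _ m).symm
  have h4 : (m:ℝ) * Real.exp ((m:ℝ) * (-(ξ/4))) ≤ Real.exp (-(ξ/4)) := by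
    have hme : (m:ℝ) ≤ Real.exp ((m:ℝ) - 1) := by
      have := Real.add_one_le_exp ((m:ℝ) - 1)
      linarith
    have hexp : Real.exp ((m:ℝ) - 1) ≤ Real.exp (((m:ℝ) - 1) * (ξ/4)) := by
      apply Real.exp_le_exp.mpr
      nlinarith
    have hprod : Real.exp (((m:ℝ) - 1) * (ξ/4)) * Real.exp ((m:ℝ) * (-(ξ/4)))
        = Real.exp (-(ξ/4)) := by rw [← Real.exp_add]; ring_nf
    calc (m:ℝ) * Real.exp ((m:ℝ) * (-(ξ/4)))
        ≤ Real.exp (((m:ℝ) - 1) * (ξ/4)) * Real.exp ((m:ℝ) * (-(ξ/4))) := by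
          exact mul_le_mul_of_nonneg_right (hme.trans hexp) (Real.exp_pos _).le
      _ = Real.exp (-(ξ/4)) := hprod
  calc S m ((m:ℝ)*ξ) * Real.exp (-((m:ℝ)*ξ)) ≤ m * (ξ * Real.exp (1-ξ))^m := h1
    _ ≤ m * (Real.exp (-(ξ/4)))^m := mul_le_mul_of_nonneg_left h2 hm0.le
    _ = m * Real.exp ((m:ℝ) * (-(ξ/4))) := by rw [h3]
    _ ≤ Real.exp (-(ξ/4)) := h4

/-- Uniform integrable bound on the integrand. -/
lemma integrand_bound (n r : ℕ) (hn : 0 < n) {m : ℕ} (hm : 1 ≤ m) {ξ : ℝ} (h0 : 0 < ξ) :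
    (1 - (1 - S m ((m:ℝ)*ξ) * Real.exp (-((m:ℝ)*ξ)))^n) * ξ^(r-1)
      ≤ ((n:ℝ) * (Nat.factorial (r-1)) * 8^(r-1) * Real.exp 1) * Real.exp (-(ξ/8)) := by
  have hy0 : (0:ℝ) ≤ (m:ℝ)*ξ := by positivity
  have hG1 := G_le_one m hy0
  have hG0 := G_nonneg m hy0
  set G : ℝ := S m ((m:ℝ)*ξ) * Real.exp (-((m:ℝ)*ξ)) with hGdef
  have hn1 : (1:ℝ) ≤ n := by exact_mod_cast hn
  have hf1 : (1:ℝ) ≤ (Nat.factorial (r-1) : ℝ) := by exact_mod_cast (Nat.factorial_pos (r-1))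
  have hb : 1 - (1 - G)^n ≤ n * G := by
    have := one_add_mul_le_pow (a := -G) (by linarith) n
    have h : 1 + (n:ℝ) * (-G) ≤ (1 - G)^n := by
      rw [sub_eq_add_neg]; exact this
    nlinarith
  have hDn : 1 - (1 - G)^n ≤ 1 := by
    have : (0:ℝ) ≤ (1 - G)^n := pow_nonneg (by linarith) n
    linarith
  have hxr : (0:ℝ) ≤ ξ^(r-1) := pow_nonneg h0.le _
  rcases le_or_gt ξ 4 with hle | hgt
  · -- ξ ≤ 4
    have step1 : (1 - (1 - G)^n) * ξ^(r-1) ≤ ξ^(r-1) := by nlinarith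
    have step2 : ξ^(r-1) ≤ (4:ℝ)^(r-1) := pow_le_pow_left₀ h0.le hle _
    have e3 : (4:ℝ)^(r-1) ≤ (8:ℝ)^(r-1) := pow_le_pow_left₀ (by norm_num) (by norm_num) _
    have e4 : (1:ℝ) ≤ Real.exp 1 * Real.exp (-(ξ/8)) := by
      rw [← Real.exp_add]
      apply Real.one_le_exp
      linarith
    have h8 : (0:ℝ) ≤ (8:ℝ)^(r-1) := by positivity
    calc (1 - (1 - G)^n) * ξ^(r-1) ≤ (4:ℝ)^(r-1) := step1.trans step2
      _ = 1 * (1 * ((4:ℝ)^(r-1) * 1)) := by ring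
      _ ≤ (n:ℝ) * ((Nat.factorial (r-1):ℝ) * ((8:ℝ)^(r-1) * (Real.exp 1 * Real.exp (-(ξ/8))))) := by
          apply mul_le_mul hn1
          · apply mul_le_mul hf1
            · exact mul_le_mul e3 e4 zero_le_one h8
            · positivity
            · linarith
          · positivity
          · linarith
      _ = ((n:ℝ) * (Nat.factorial (r-1)) * 8^(r-1) * Real.exp 1) * Real.exp (-(ξ/8)) := by ring
  · -- ξ > 4
    have hch : G ≤ Real.exp (-(ξ/4)) := chernoff_uniform hm hgt.le
    have hxb : ξ^(r-1) ≤ (Nat.factorial (r-1):ℝ) * 8^(r-1) * Real.exp (ξ/8) := by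
      have h := Real.pow_div_factorial_le_exp (ξ/8) (by positivity) (r-1)
      have h8 : (0:ℝ) < (8:ℝ)^(r-1) := by positivity
      have hf0 : (0:ℝ) < (Nat.factorial (r-1):ℝ) := by positivity
      rw [div_pow, div_div] at h
      rw [div_le_iff₀ (by positivity)] at h
      calc ξ^(r-1) ≤ Real.exp (ξ/8) * ((8:ℝ)^(r-1) * (Nat.factorial (r-1):ℝ)) := h
        _ = (Nat.factorial (r-1):ℝ) * 8^(r-1) * Real.exp (ξ/8) := by ring
    have hexp8 : Real.exp (-(ξ/4)) * Real.exp (ξ/8) = Real.exp (-(ξ/8)) := by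
      rw [← Real.exp_add]; ring_nf
    have hone : (1:ℝ) ≤ Real.exp 1 := Real.one_le_exp zero_le_one
    calc (1 - (1 - G)^n) * ξ^(r-1) ≤ ((n:ℝ) * G) * ξ^(r-1) :=
          mul_le_mul_of_nonneg_right hb hxr
      _ ≤ ((n:ℝ) * Real.exp (-(ξ/4))) * ((Nat.factorial (r-1):ℝ) * 8^(r-1) * Real.exp (ξ/8)) := by
          apply mul_le_mul
          · exact mul_le_mul_of_nonneg_left hch (by positivity)
          · exact hxb
          · exact hxr
          · positivity
      _ = ((n:ℝ) * (Nat.factorial (r-1):ℝ) * 8^(r-1)) * (Real.exp (-(ξ/4)) * Real.exp (ξ/8)) := by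
          ring
      _ = ((n:ℝ) * (Nat.factorial (r-1):ℝ) * 8^(r-1)) * Real.exp (-(ξ/8)) := by rw [hexp8]
      _ ≤ ((n:ℝ) * (Nat.factorial (r-1)) * 8^(r-1) * Real.exp 1) * Real.exp (-(ξ/8)) := by
          have hp : (0:ℝ) ≤ ((n:ℝ) * (Nat.factorial (r-1):ℝ) * 8^(r-1)) * Real.exp (-(ξ/8)) := by
            positivity
          nlinarith [Real.exp_pos (-(ξ/8))]

/-- Fix `n` and let `m → ∞`: for every fixed positive integer `r`,
`r ∫_0^∞ [1 − (1 − S_m(mξ)e^{−mξ})^n] ξ^{r−1} dξ → 1`, i.e. the `r`-th moment of the maximum of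
`n` independent Erlang(m, 1/n) random variables is asymptotically `n^r m^r` as `m → ∞`. -/
theorem stmt1 (n : ℕ) (hn : 0 < n) (r : ℕ) (hr : 0 < r) :
    Tendsto (fun m : ℕ =>
        (r : ℝ) * ∫ ξ in Set.Ioi (0 : ℝ),
          (1 - (1 - S m ((m : ℝ) * ξ) * Real.exp (-((m : ℝ) * ξ))) ^ n) * ξ ^ (r - 1))
      atTop (nhds 1) := by
  have hC0 : (0:ℝ) ≤ (n:ℝ) * (Nat.factorial (r-1)) * 8^(r-1) * Real.exp 1 := by positivity
  have hmain : Tendsto (fun m : ℕ => ∫ ξ in Set.Ioi (0:ℝ),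
      (1 - (1 - S m ((m:ℝ)*ξ) * Real.exp (-((m:ℝ)*ξ)))^n) * ξ^(r-1)) atTop
      (nhds (∫ ξ in Set.Ioi (0:ℝ), Set.indicator (Set.Ioo (0:ℝ) 1) (fun t => t^(r-1)) ξ)) := by
    apply tendsto_integral_filter_of_dominated_convergence
      (fun ξ => ((n:ℝ) * (Nat.factorial (r-1)) * 8^(r-1) * Real.exp 1) * Real.exp (-(ξ/8)))
    · apply Eventually.of_forall
      intro m
      apply Continuous.aestronglyMeasurable
      fun_prop
    · filter_upwards [eventually_ge_atTop 1] with m hm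
      rw [ae_restrict_iff' measurableSet_Ioi]
      apply Eventually.of_forall
      intro ξ hξ
      have h0 : (0:ℝ) < ξ := hξ
      rw [Real.norm_eq_abs, abs_of_nonneg (integrand_nonneg n h0 r)]
      exact integrand_bound n r hn hm h0
    · have hint : IntegrableOn (fun x : ℝ => Real.exp (-8⁻¹ * x)) (Set.Ioi (0:ℝ)) :=
        exp_neg_integrableOn_Ioi 0 (by norm_num)
      have heq : (fun ξ : ℝ => ((n:ℝ) * (Nat.factorial (r-1)) * 8^(r-1) * Real.exp 1) * Real.exp (-(ξ/8)))
          = fun ξ : ℝ => ((n:ℝ) * (Nat.factorial (r-1)) * 8^(r-1) * Real.exp 1) * Real.exp (-8⁻¹ * ξ) := by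
        funext ξ
        rw [show -(ξ/8) = -8⁻¹*ξ by ring]
      rw [heq]
      exact hint.const_mul _
    · have hne : ∀ᵐ ξ : ℝ, ξ ≠ (1:ℝ) := by
        refine (MeasureTheory.ae_iff).mpr ?_
        simp only [not_not]
        have h1 : {a : ℝ | a = 1} = {(1:ℝ)} := by ext x; simp
        rw [h1]
        exact measure_singleton 1
      filter_upwards [ae_restrict_of_ae hne, ae_restrict_mem measurableSet_Ioi] with ξ hξ1 hξ0
      exact ptwise n r hn hξ0 hξ1
  have hval : ∫ ξ in Set.Ioi (0:ℝ), Set.indicator (Set.Ioo (0:ℝ) 1) (fun t => t^(r-1)) ξ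
      = 1 / (r:ℝ) := by
    rw [MeasureTheory.setIntegral_indicator measurableSet_Ioo]
    rw [Set.inter_eq_right.mpr Set.Ioo_subset_Ioi_self]
    rw [← MeasureTheory.integral_Ioc_eq_integral_Ioo,
      ← intervalIntegral.integral_of_le zero_le_one]
    rw [integral_pow]
    have hc : ((r-1:ℕ):ℝ) + 1 = (r:ℝ) := by exact_mod_cast Nat.succ_pred_eq_of_pos hr
    rw [hc, one_pow, zero_pow (by omega : r - 1 + 1 ≠ 0)]
    norm_num
  rw [hval] at hmain
  have hfin := hmain.const_mul (r:ℝ)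
  have h1r : (r:ℝ) * (1/(r:ℝ)) = 1 := by
    field_simp
  rw [h1r] at hfin
  exact hfin
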